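/- Let A = diag(a_1,…,a_n) be a real diagonal matrix, let w ∈ C²(ℝ), and define u(x) = w(½ ∑_{i=1}^n a_i x_i²) for x ∈ ℝⁿ. Set s = ½ ∑_{i=1}^n a_i x_i² and a = (a_1,…,a_n). Then for every x ∈ ℝⁿ the Hessian matrix of u satisfies D²u(x) = w'(s) A + w''(s) (Ax)(Ax)ᵀ, and for every 1 ≤ k ≤ n, σ_k(λ(D²u(x))) = σ_k(a) (w'(s))^k + w''(s) (w'(s))^{k−1} ∑_{i=1}^n σ_{k−1;i}(a) (a_i x_i)². -/

import Mathlib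

open scoped BigOperators
open Filter MeasureTheory Set

noncomputable section

/-- Euclidean `n`-space `ℝⁿ`. -/
abbrev En (n : ℕ) : Type := EuclideanSpace ℝ (Fin n)

/-- `σ_k(a)`: the `k`-th elementary symmetric polynomial of `a : Fin n → ℝ`. -/
def esym (n k : ℕ) (a : Fin n → ℝ) : ℝ :=
  ∑ t ∈ Finset.powersetCard k (Finset.univ : Finset (Fin n)), ∏ i ∈ t, a i

/-- `σ_{k;i}(a) := σ_k(a)|_{a_i = 0}`. -/
def esymDel (n k : ℕ) (a : Fin n → ℝ) (i : Fin n) : ℝ :=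
  esym n k (Function.update a i 0)

/-- `H_k(a) = max_{1 ≤ i ≤ n} σ_{k-1;i}(a) a_i / σ_k(a)`. -/
def Hfun (n k : ℕ) (a : Fin n → ℝ) : ℝ :=
  ⨆ i : Fin n, esymDel n (k - 1) a i * a i / esym n k a

/-- `h_l(a) = min_{1 ≤ i ≤ n} σ_{l-1;i}(a) a_i / σ_l(a)`, with `h_0 = 0`. -/
def hfun (n l : ℕ) (a : Fin n → ℝ) : ℝ :=
  if l = 0 then 0 else ⨅ i : Fin n, esymDel n (l - 1) a i * a i / esym n l a

/-- The Hessian matrix `D²u(x)` of a function `u : ℝⁿ → ℝ`. -/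
def hess {n : ℕ} (u : En n → ℝ) (x : En n) : Matrix (Fin n) (Fin n) ℝ :=
  Matrix.of fun i j =>
    fderiv ℝ (fun y => fderiv ℝ u y (EuclideanSpace.single j 1)) x (EuclideanSpace.single i 1)

/-- `σ_k(λ(M))`: the `k`-th elementary symmetric function of the eigenvalues of `M`,
expressed via the coefficients of the characteristic polynomial. -/
def sigmaEig {n : ℕ} (k : ℕ) (M : Matrix (Fin n) (Fin n) ℝ) : ℝ :=
  (-1 : ℝ) ^ k * M.charpoly.coeff (n - k)

/-- The Hessian quotient operator `S_{k,l}(M) = σ_k(λ(M))/σ_l(λ(M))`. -/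
def Skl {n : ℕ} (k l : ℕ) (M : Matrix (Fin n) (Fin n) ℝ) : ℝ :=
  sigmaEig k M / sigmaEig l M

/-- The Garding cone `Γ_k = {λ : σ_j(λ) > 0, 1 ≤ j ≤ k}`. -/
def GammaCone (n k : ℕ) : Set (Fin n → ℝ) :=
  {lam | ∀ j : ℕ, 1 ≤ j → j ≤ k → 0 < esym n j lam}

/-- `ψ` is `k`-convex at `x`: the (symmetric) Hessian has eigenvalue vector in `closure Γ_k`. -/
def KConvexAt (n k : ℕ) (ψ : En n → ℝ) (x : En n) : Prop :=
  ∃ hsym : (hess ψ x).IsHermitian, hsym.eigenvalues ∈ closure (GammaCone n k)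

/-- Viscosity subsolution of `S_{k,l}(D²u) = 1` on `Ω`. -/
def ViscSubOn (n k l : ℕ) (Ω : Set (En n)) (u : En n → ℝ) : Prop :=
  UpperSemicontinuousOn u Ω ∧
  ∀ ψ : En n → ℝ, ContDiffOn ℝ 2 ψ Ω → (∀ x ∈ Ω, KConvexAt n k ψ x) →
    ∀ x₀ ∈ Ω, ψ x₀ = u x₀ → (∀ x ∈ Ω, u x ≤ ψ x) → 1 ≤ Skl k l (hess ψ x₀)

/-- Viscosity supersolution of `S_{k,l}(D²u) = 1` on `Ω`. -/
def ViscSupOn (n k l : ℕ) (Ω : Set (En n)) (u : En n → ℝ) : Prop :=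
  LowerSemicontinuousOn u Ω ∧
  ∀ ψ : En n → ℝ, ContDiffOn ℝ 2 ψ Ω → (∀ x ∈ Ω, KConvexAt n k ψ x) →
    ∀ x₀ ∈ Ω, ψ x₀ = u x₀ → (∀ x ∈ Ω, ψ x ≤ u x) → Skl k l (hess ψ x₀) ≤ 1

/-- Viscosity solution of the exterior Dirichlet problem
`S_{k,l}(D²u) = 1` in `ℝⁿ ∖ D̄`, `u = φ` on `∂D`, `u ∈ C⁰(ℝⁿ ∖ D)`. -/
def ExtViscSolution (n k l : ℕ) (D : Set (En n)) (φ u : En n → ℝ) : Prop :=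
  ContinuousOn u Dᶜ ∧
  ViscSubOn n k l (closure D)ᶜ u ∧
  ViscSupOn n k l (closure D)ᶜ u ∧
  ∀ x ∈ frontier D, u x = φ x

/-- A smooth, bounded, strictly convex open set. -/
structure SmoothStrictlyConvexDomain (n : ℕ) (D : Set (En n)) : Prop where
  isOpen : IsOpen D
  nonempty : D.Nonempty
  bounded : Bornology.IsBounded D
  strictConvex : StrictConvex ℝ D
  smoothBoundary : ∃ f : En n → ℝ, ContDiff ℝ (⊤ : ℕ∞) f ∧ D = {x | f x < 0} ∧
    ∀ x ∈ frontier D, fderiv ℝ f x ≠ 0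

/-- `½ xᵀ A x`. -/
def quadForm {n : ℕ} (A : Matrix (Fin n) (Fin n) ℝ) (x : En n) : ℝ :=
  (1 / 2) * ∑ i, ∑ j, A i j * x i * x j

/-- `s(x) = ½ ∑ a_i x_i²` (i.e. `½ xᵀAx` for `A = diag a`). -/
def sdiag {n : ℕ} (a : Fin n → ℝ) (x : En n) : ℝ :=
  (1 / 2) * ∑ i, a i * x i ^ 2

end


section AuxLemmas

open Polynomial Matrix

private lemma det_diag_add_col_mul_row' {K : Type*} [Field K] {n : ℕ} (d u v : Fin n → K)
    (hd : ∀ i, d i ≠ 0) :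
    (Matrix.diagonal d + Matrix.replicateCol (Fin 1) u * Matrix.replicateRow (Fin 1) v).det =
      ∏ i, d i + ∑ i, u i * v i * ∏ j ∈ Finset.univ.erase i, d j := by
  have hdet : IsUnit (Matrix.diagonal d).det := by
    rw [Matrix.det_diagonal]
    exact (Finset.prod_ne_zero_iff.2 fun i _ => hd i).isUnit
  have hinv : (Matrix.diagonal d)⁻¹ = Matrix.diagonal (fun i => (d i)⁻¹) := by
    apply Matrix.inv_eq_right_inv
    rw [Matrix.diagonal_mul_diagonal]
    have : (fun i => d i * (d i)⁻¹) = fun _ => (1 : K) :=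
      funext fun i => mul_inv_cancel₀ (hd i)
    rw [this, Matrix.diagonal_one]
  rw [show (Matrix.diagonal d + Matrix.replicateCol (Fin 1) u * Matrix.replicateRow (Fin 1) v).det = _ from
    Matrix.det_add_replicateCol_mul_replicateRow hdet u v, hinv, Matrix.det_diagonal]
  simp only [Matrix.det_unique, Matrix.add_apply, Matrix.one_apply_eq, Matrix.mul_apply,
    Matrix.diagonal_apply, Matrix.replicateRow_apply, Matrix.replicateCol_apply, Finset.sum_ite_eq,
    Finset.mem_univ, if_true, mul_ite, mul_zero, ite_mul, zero_mul]
  rw [mul_add, mul_one, Finset.mul_sum]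
  congr 1
  refine Finset.sum_congr rfl fun i _ => ?_
  rw [← Finset.mul_prod_erase Finset.univ d (Finset.mem_univ i)]
  field_simp
  rw [Finset.sum_ite_eq', if_pos (Finset.mem_univ _), mul_div_assoc', div_mul_eq_mul_div,
    div_eq_iff (hd i)]
  ring

private lemma charpoly_diag_add_vecMulVec' {n : ℕ} (t c : ℝ) (a b : Fin n → ℝ) :
    (t • Matrix.diagonal a + c • Matrix.vecMulVec b b).charpoly =
      ∏ i, (X - C (t * a i)) -
        ∑ i, C (c * b i ^ 2) * ∏ j ∈ Finset.univ.erase i, (X - C (t * a j)) := by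
  set M := t • Matrix.diagonal a + c • Matrix.vecMulVec b b with hM
  have hcm : charmatrix M = Matrix.diagonal (fun i => (X : ℝ[X]) - C (t * a i)) +
      Matrix.replicateCol (Fin 1) (fun i => C (-(c * b i))) * Matrix.replicateRow (Fin 1) (fun i => C (b i)) := by
    rw [show Matrix.replicateCol (Fin 1) (fun i => C (-(c * b i))) * Matrix.replicateRow (Fin 1) (fun i => (C (b i) : ℝ[X]))
        = Matrix.vecMulVec (fun i => C (-(c * b i))) (fun i => C (b i)) from
      (Matrix.vecMulVec_eq (Fin 1) _ _).symm]
    ext i j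
    by_cases h : i = j
    · subst h
      simp only [charmatrix_apply_eq, hM, Matrix.add_apply, Matrix.smul_apply,
        Matrix.diagonal_apply_eq, Matrix.vecMulVec_apply, smul_eq_mul]
      simp only [C_add, C_mul, C_neg]
      ring
    · simp only [charmatrix_apply_ne _ _ _ h, hM, Matrix.add_apply, Matrix.smul_apply,
        Matrix.diagonal_apply_ne _ h, Matrix.vecMulVec_apply, smul_eq_mul, mul_zero, zero_add]
      simp only [C_mul, C_neg]
      ring
  have hphiinj : Function.Injective (algebraMap ℝ[X] (FractionRing ℝ[X])) :=
    IsFractionRing.injective _ _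
  apply hphiinj
  set phi := algebraMap ℝ[X] (FractionRing ℝ[X]) with hphi
  rw [Matrix.charpoly, hcm, RingHom.map_det, RingHom.mapMatrix_apply]
  have hmap : ((Matrix.diagonal (fun i => (X : ℝ[X]) - C (t * a i)) +
      Matrix.replicateCol (Fin 1) (fun i => C (-(c * b i))) * Matrix.replicateRow (Fin 1) (fun i => C (b i))).map phi)
      = Matrix.diagonal (fun i => phi ((X : ℝ[X]) - C (t * a i))) +
        Matrix.replicateCol (Fin 1) (fun i => phi (C (-(c * b i)))) *
          Matrix.replicateRow (Fin 1) (fun i => phi (C (b i))) := by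
    ext i j
    by_cases h : i = j
    · subst h
      simp [Matrix.map_apply, Matrix.add_apply, Matrix.mul_apply, Matrix.diagonal_apply_eq,
        Matrix.replicateCol_apply, Matrix.replicateRow_apply, map_add]
    · simp [Matrix.map_apply, Matrix.add_apply, Matrix.mul_apply,
        Matrix.diagonal_apply_ne _ h, Matrix.replicateCol_apply, Matrix.replicateRow_apply, map_add]
  rw [hmap, det_diag_add_col_mul_row' _ _ _ (fun i => fun h =>
      X_sub_C_ne_zero (t * a i) ((map_eq_zero_iff phi hphiinj).1 h))]
  rw [map_sub, map_prod, map_sum, sub_eq_add_neg, ← Finset.sum_neg_distrib]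
  congr 1
  refine Finset.sum_congr rfl fun i _ => ?_
  rw [_root_.map_mul, map_prod, ← _root_.map_mul phi, ← C_mul,
    show -(c * b i) * b i = -(c * b i ^ 2) by ring, C_neg, map_neg, neg_mul]

private lemma powerset_scale' {n : ℕ} (s : Finset (Fin n)) (k : ℕ) (t : ℝ) (a : Fin n → ℝ) :
    ∑ T ∈ Finset.powersetCard k s, ∏ j ∈ T, (t * a j)
      = t ^ k * ∑ T ∈ Finset.powersetCard k s, ∏ j ∈ T, a j := by
  rw [Finset.mul_sum]
  refine Finset.sum_congr rfl fun T hT => ?_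
  rw [Finset.prod_mul_distrib, Finset.prod_const, (Finset.mem_powersetCard.1 hT).2]

private lemma esymDel_eq' {n : ℕ} (m : ℕ) (a : Fin n → ℝ) (i : Fin n) :
    esymDel n m a i = ∑ T ∈ Finset.powersetCard m (Finset.univ.erase i), ∏ j ∈ T, a j := by
  unfold esymDel esym
  rw [← Finset.sum_filter_add_sum_filter_not
    (Finset.powersetCard m (Finset.univ : Finset (Fin n))) (fun T => i ∈ T)]
  have h0 : ∑ T ∈ (Finset.powersetCard m (Finset.univ : Finset (Fin n))).filter
      (fun T => i ∈ T), ∏ j ∈ T, Function.update a i 0 j = 0 := by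
    refine Finset.sum_eq_zero fun T hT => Finset.prod_eq_zero
      (Finset.mem_filter.1 hT).2 (Function.update_self i 0 a)
  have hfil : (Finset.powersetCard m (Finset.univ : Finset (Fin n))).filter
      (fun T => ¬ i ∈ T) = Finset.powersetCard m (Finset.univ.erase i) := by
    ext T
    simp only [Finset.mem_filter, Finset.mem_powersetCard, Finset.subset_erase]
    tauto
  rw [h0, zero_add, hfil]
  refine Finset.sum_congr rfl fun T hT => Finset.prod_congr rfl fun j hj => ?_
  have hji : j ≠ i := by
    have := (Finset.mem_powersetCard.1 hT).1 hj
    exact Finset.ne_of_mem_erase this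
  exact Function.update_of_ne hji 0 a

private lemma coeff_prod_univ' {n : ℕ} (t : ℝ) (a : Fin n → ℝ) {k : ℕ} (hk : k ≤ n) :
    (∏ i, ((X : ℝ[X]) - C (t * a i))).coeff (n - k) = (-1) ^ k * t ^ k * esym n k a := by
  have h1 : (∏ i, ((X : ℝ[X]) - C (t * a i)))
      = ((Finset.univ.val.map (fun i => t * a i)).map (fun r => X - C r)).prod := by
    rw [Finset.prod_eq_multiset_prod, Multiset.map_map]
    rfl
  have hcard : Multiset.card (Finset.univ.val.map (fun i : Fin n => t * a i)) = n := by
    simp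
  have hle : n - k ≤ Multiset.card (Finset.univ.val.map (fun i : Fin n => t * a i)) := by
    omega
  rw [h1, Multiset.prod_X_sub_C_coeff _ hle, hcard, Nat.sub_sub_self hk,
    Finset.esymm_map_val, esym]
  rw [show ((Finset.powersetCard k Finset.univ).sum fun T => T.prod fun i => t * a i)
    = ∑ T ∈ Finset.powersetCard k Finset.univ, ∏ j ∈ T, (t * a j) from rfl,
    powerset_scale']
  ring

private lemma coeff_prod_erase' {n : ℕ} (t : ℝ) (a : Fin n → ℝ) (i : Fin n) {k : ℕ}
    (hk1 : 1 ≤ k) (hk : k ≤ n) :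
    (∏ j ∈ Finset.univ.erase i, ((X : ℝ[X]) - C (t * a j))).coeff (n - k)
      = (-1) ^ (k - 1) * t ^ (k - 1) * esymDel n (k - 1) a i := by
  have h1 : (∏ j ∈ Finset.univ.erase i, ((X : ℝ[X]) - C (t * a j)))
      = (((Finset.univ.erase i).val.map (fun j => t * a j)).map (fun r => X - C r)).prod := by
    rw [Finset.prod_eq_multiset_prod, Multiset.map_map]
    rfl
  have hcard : Multiset.card ((Finset.univ.erase i).val.map (fun j : Fin n => t * a j))
      = n - 1 := by
    simp [Finset.card_erase_of_mem]
  have hle : n - k ≤ Multiset.card ((Finset.univ.erase i).val.map (fun j : Fin n => t * a j)) := by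
    omega
  have hsub : n - 1 - (n - k) = k - 1 := by omega
  rw [h1, Multiset.prod_X_sub_C_coeff _ hle, hcard, hsub, Finset.esymm_map_val,
    esymDel_eq']
  rw [show ((Finset.powersetCard (k-1) (Finset.univ.erase i)).sum fun T => T.prod fun j => t * a j)
    = ∑ T ∈ Finset.powersetCard (k-1) (Finset.univ.erase i), ∏ j ∈ T, (t * a j) from rfl,
    powerset_scale']
  ring

private lemma sigmaEig_formula' {n k : ℕ} (hk1 : 1 ≤ k) (hk : k ≤ n) (t c : ℝ)
    (a b : Fin n → ℝ) :
    sigmaEig k (t • Matrix.diagonal a + c • Matrix.vecMulVec b b)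
      = esym n k a * t ^ k + c * t ^ (k - 1) * ∑ i, esymDel n (k - 1) a i * b i ^ 2 := by
  obtain ⟨m, rfl⟩ : ∃ m, k = m + 1 := ⟨k - 1, by omega⟩
  unfold sigmaEig
  rw [charpoly_diag_add_vecMulVec', Polynomial.coeff_sub, coeff_prod_univ' t a hk,
    Polynomial.finset_sum_coeff]
  simp_rw [Polynomial.coeff_C_mul, coeff_prod_erase' t a _ hk1 hk]
  simp only [Nat.add_sub_cancel]
  rw [mul_sub, Finset.mul_sum, Finset.mul_sum]
  have hsq : (-1 : ℝ) ^ (m + 1) * (-1) ^ (m + 1) = 1 := by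
    rw [← pow_add]
    exact Even.neg_one_pow ⟨m + 1, by ring⟩
  have hsq2 : (-1 : ℝ) ^ (m + 1) * (-1) ^ m = -1 := by
    have h : (-1 : ℝ) ^ m * (-1) ^ m = 1 := by
      rw [← pow_add]; exact Even.neg_one_pow ⟨m, by ring⟩
    rw [pow_succ]
    nlinarith [h]
  rw [show ((-1:ℝ) ^ (m+1) * ((-1) ^ (m+1) * t ^ (m+1) * esym n (m+1) a))
      = ((-1:ℝ) ^ (m+1) * (-1) ^ (m+1)) * (t ^ (m+1) * esym n (m+1) a) by ring, hsq, one_mul]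
  rw [sub_eq_add_neg, ← Finset.sum_neg_distrib]
  congr 1
  · ring
  refine Finset.sum_congr rfl fun i _ => ?_
  rw [show ((-1:ℝ) ^ (m+1) * (c * b i ^ 2 * ((-1) ^ m * t ^ m * esymDel n m a i)))
      = ((-1:ℝ) ^ (m+1) * (-1) ^ m) * (c * b i ^ 2 * (t ^ m * esymDel n m a i)) by ring, hsq2]
  ring

private lemma proj_apply'' {n : ℕ} (i : Fin n) (x : En n) :
    (EuclideanSpace.proj i : En n →L[ℝ] ℝ) x = x i := rfl

/-- The gradient (as a continuous linear map) of `sdiag a` at `x`. -/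
noncomputable def gradL {n : ℕ} (a : Fin n → ℝ) (x : En n) : En n →L[ℝ] ℝ :=
  ∑ i, (a i * x i) • (EuclideanSpace.proj i : En n →L[ℝ] ℝ)

private lemma gradL_apply' {n : ℕ} (a : Fin n → ℝ) (x v : En n) :
    gradL a x v = ∑ i, (a i * x i) * v i := by
  simp [gradL, ContinuousLinearMap.sum_apply, proj_apply'']

private lemma hasFDerivAt_sdiag' {n : ℕ} (a : Fin n → ℝ) (y : En n) :
    HasFDerivAt (sdiag a) (gradL a y) y := by
  have hfun : sdiag a = fun z : En n => ∑ i, (1 / 2 * a i) * (z i * z i) := by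
    funext z
    simp only [sdiag, Finset.mul_sum]
    exact Finset.sum_congr rfl fun i _ => by ring
  rw [hfun]
  have h1 : ∀ i : Fin n, HasFDerivAt (fun z : En n => (1 / 2 * a i) * (z i * z i))
      ((a i * y i) • (EuclideanSpace.proj i : En n →L[ℝ] ℝ)) y := by
    intro i
    have hp : HasFDerivAt (fun z : En n => z i)
        (EuclideanSpace.proj i : En n →L[ℝ] ℝ) y :=
      (EuclideanSpace.proj i : En n →L[ℝ] ℝ).hasFDerivAt
    have h := (hp.fun_mul hp).const_mul (1 / 2 * a i)
    refine h.congr_fderiv ?_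
    ext v
    simp only [ContinuousLinearMap.smul_apply, ContinuousLinearMap.add_apply,
      proj_apply'', smul_eq_mul]
    ring
  exact HasFDerivAt.fun_sum fun i _ => h1 i

private lemma hasFDerivAt_gsym' {n : ℕ} (a : Fin n → ℝ) (w : ℝ → ℝ) (hw : ContDiff ℝ 2 w)
    (y : En n) :
    HasFDerivAt (fun z : En n => w (sdiag a z)) (deriv w (sdiag a y) • gradL a y) y :=
  ((hw.differentiable (by norm_num) (sdiag a y)).hasDerivAt).comp_hasFDerivAt y
    (hasFDerivAt_sdiag' a y)

private lemma grad_gsym' {n : ℕ} (a : Fin n → ℝ) (w : ℝ → ℝ) (hw : ContDiff ℝ 2 w)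
    (y : En n) (j : Fin n) :
    fderiv ℝ (fun z : En n => w (sdiag a z)) y (EuclideanSpace.single j 1)
      = deriv w (sdiag a y) * (a j * y j) := by
  rw [(hasFDerivAt_gsym' a w hw y).fderiv]
  simp only [ContinuousLinearMap.smul_apply, smul_eq_mul, gradL_apply']
  congr 1
  rw [Finset.sum_eq_single j]
  · simp [EuclideanSpace.single_apply]
  · intro i _ hij
    simp [EuclideanSpace.single_apply, hij]
  · simp

private theorem hess_gsym' (n : ℕ) (a : Fin n → ℝ) (w : ℝ → ℝ) (hw : ContDiff ℝ 2 w) (x : En n) :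
    hess (fun y : En n => w (sdiag a y)) x =
      deriv w (sdiag a x) • Matrix.diagonal a +
        deriv (deriv w) (sdiag a x) •
          Matrix.vecMulVec (fun i => a i * x i) (fun i => a i * x i) := by
  have hw1 : Differentiable ℝ (deriv w) := by
    have h2 : ContDiff ℝ ((1 : WithTop ℕ∞) + 1) w := by
      rw [one_add_one_eq_two]; exact hw
    exact ((contDiff_succ_iff_deriv.mp h2).2.2).differentiable one_ne_zero
  ext i j
  show fderiv ℝ (fun y => fderiv ℝ (fun z : En n => w (sdiag a z)) y
      (EuclideanSpace.single j 1)) x (EuclideanSpace.single i 1) = _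
  have hfun : (fun y => fderiv ℝ (fun z : En n => w (sdiag a z)) y (EuclideanSpace.single j 1))
      = fun y => deriv w (sdiag a y) * (a j * y j) :=
    funext fun y => grad_gsym' a w hw y j
  rw [hfun]
  have hA : HasFDerivAt (fun y : En n => deriv w (sdiag a y))
      (deriv (deriv w) (sdiag a x) • gradL a x) x :=
    ((hw1 (sdiag a x)).hasDerivAt).comp_hasFDerivAt x (hasFDerivAt_sdiag' a x)
  have hB : HasFDerivAt (fun y : En n => a j * y j)
      ((a j) • (EuclideanSpace.proj j : En n →L[ℝ] ℝ)) x :=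
    ((EuclideanSpace.proj j : En n →L[ℝ] ℝ).hasFDerivAt).const_mul (a j)
  rw [(hA.fun_mul hB).fderiv]
  simp only [ContinuousLinearMap.add_apply, ContinuousLinearMap.smul_apply, smul_eq_mul,
    proj_apply'', gradL_apply', Matrix.add_apply, Matrix.smul_apply,
    Matrix.vecMulVec_apply, Matrix.diagonal_apply]
  have hsingle : ∀ l : Fin n, (EuclideanSpace.single i (1:ℝ)) l = if l = i then 1 else 0 :=
    fun l => EuclideanSpace.single_apply i 1 l
  rw [Finset.sum_eq_single i (fun l _ hli => by simp [hsingle, hli])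
    (by simp), hsingle i, if_pos rfl]
  by_cases h : i = j
  · subst h; simp [hsingle]; ring
  · simp [hsingle, h, Ne.symm h]
    ring

end AuxLemmas

/-- Lemma 2.1 (Bao–Li–Li): for a G-Sym function `u(x) = w(½∑ aᵢxᵢ²)`,
`D²u = w'(s) A + w''(s) (Ax)(Ax)ᵀ` and
`σ_k(λ(D²u)) = σ_k(a) w'(s)^k + w''(s) w'(s)^{k-1} ∑ σ_{k-1;i}(a)(aᵢxᵢ)²`. -/
theorem hessian_of_gsym_function
    (n : ℕ) (a : Fin n → ℝ) (w : ℝ → ℝ) (hw : ContDiff ℝ 2 w)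
    (x : En n) :
    hess (fun y : En n => w (sdiag a y)) x =
      deriv w (sdiag a x) • Matrix.diagonal a +
        deriv (deriv w) (sdiag a x) •
          Matrix.vecMulVec (fun i => a i * x i) (fun i => a i * x i) ∧
    ∀ k : ℕ, 1 ≤ k → k ≤ n →
      sigmaEig k (hess (fun y : En n => w (sdiag a y)) x) =
        esym n k a * deriv w (sdiag a x) ^ k +
          deriv (deriv w) (sdiag a x) * deriv w (sdiag a x) ^ (k - 1) *
            ∑ i, esymDel n (k - 1) a i * (a i * x i) ^ 2 := by
  refine ⟨hess_gsym' n a w hw x, fun k hk1 hkn => ?_⟩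
  rw [hess_gsym' n a w hw x]
  exact sigmaEig_formula' hk1 hkn (deriv w (sdiag a x)) (deriv (deriv w) (sdiag a x)) a
    (fun i => a i * x i)
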